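/- In a normed space, 0 ∈ Cl²(F, x̄)(v, v) whenever v ∈ Ha(F, x̄) and x̄ ∈ F. -/

import Mathlib

open Filter Topology

variable {X : Type*} [NormedAddCommGroup X] [NormedSpace ℝ X]

/-- The Hadamard (hypertangent) cone. -/
def Ha (F : Set X) (xbar : X) : Set X :=
  {h | ∃ U ∈ nhds xbar, ∃ W ∈ nhds h, ∃ lam > (0:ℝ),
    ∀ x' ∈ F ∩ U, ∀ lam' : ℝ, 0 < lam' → lam' ≤ lam → ∀ w ∈ W, x' + lam' • w ∈ F}

/-- The second-order Clarke tangent set. -/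
def Cl2 (F : Set X) (xbar v1 v2 : X) : Set X :=
  {v | ∀ V ∈ nhds (0:X), ∀ V1 ∈ nhds (0:X), ∀ V2 ∈ nhds (0:X),
    ∃ U ∈ nhds xbar, ∃ lam1 > (0:ℝ), ∃ lam2 > (0:ℝ),
      ∀ x' ∈ F ∩ U, ∀ lam' lam'' : ℝ, 0 < lam' → lam' ≤ lam1 → 0 < lam'' → lam'' ≤ lam2 →
        ∃ v' v'' u : X, v' - v1 ∈ V1 ∧ x' + lam' • v' ∈ F ∧
          v'' - v2 ∈ V2 ∧ x' + lam'' • v'' ∈ F ∧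
          u - v ∈ V ∧ x' + lam' • v' + lam'' • v'' + (4 * lam' * lam'') • u ∈ F}

theorem zero_mem_cl2 (F : Set X) (xbar : X) (hx : xbar ∈ F) (v : X)
    (hv : v ∈ Ha F xbar) : (0:X) ∈ Cl2 F xbar v v := by
  intro V hV V1 hV1 V2 hV2
  obtain ⟨U, hU, W, hW, lam, hlam, hHa⟩ := hv
  obtain ⟨ε, hε, hball⟩ := Metric.mem_nhds_iff.mp hU
  set lam0 : ℝ := min lam (ε / (2 * (‖v‖ + 1))) with hlam0def
  have hnv : (0:ℝ) < ‖v‖ + 1 := by positivity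
  have hlam0 : 0 < lam0 := lt_min hlam (by positivity)
  refine ⟨Metric.ball xbar (ε / 2), Metric.ball_mem_nhds _ (by positivity),
    lam0, hlam0, lam0, hlam0, ?_⟩
  intro x' hx' lam' lam'' h1 h2 h3 h4
  have hvW : v ∈ W := mem_of_mem_nhds hW
  have hx'U : x' ∈ F ∩ U := ⟨hx'.1, hball (Metric.ball_subset_ball (by linarith) hx'.2)⟩
  have key : ∀ μ : ℝ, 0 < μ → μ ≤ lam0 → μ * ‖v‖ < ε / 2 := by
    intro μ hμ hμle
    calc μ * ‖v‖ ≤ (ε / (2 * (‖v‖ + 1))) * ‖v‖ := by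
          apply mul_le_mul_of_nonneg_right (hμle.trans (min_le_right _ _)) (norm_nonneg v)
      _ < (ε / (2 * (‖v‖ + 1))) * (‖v‖ + 1) := by
          apply mul_lt_mul_of_pos_left (by linarith) (by positivity)
      _ = ε / 2 := by field_simp
  have hF1 : x' + lam' • v ∈ F :=
    hHa x' hx'U lam' h1 (h2.trans (min_le_left _ _)) v hvW
  have hmem : x' + lam' • v ∈ F ∩ U := by
    refine ⟨hF1, hball ?_⟩
    have : dist (x' + lam' • v) xbar ≤ dist x' xbar + ‖lam' • v‖ := by
      calc dist (x' + lam' • v) xbar ≤ dist (x' + lam' • v) x' + dist x' xbar :=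
            dist_triangle _ _ _
        _ = ‖lam' • v‖ + dist x' xbar := by rw [dist_self_add_left]
        _ = dist x' xbar + ‖lam' • v‖ := by ring
    have hx'd : dist x' xbar < ε / 2 := hx'.2
    have hn : ‖lam' • v‖ = lam' * ‖v‖ := by
      rw [norm_smul, Real.norm_eq_abs, abs_of_pos h1]
    have := key lam' h1 h2
    simp only [Metric.mem_ball]
    linarith [hn ▸ this]
  have hF2 : x' + lam' • v + lam'' • v ∈ F :=
    hHa _ hmem lam'' h3 (h4.trans (min_le_left _ _)) v hvW
  refine ⟨v, v, 0, by simpa using mem_of_mem_nhds hV1, hF1,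
    by simpa using mem_of_mem_nhds hV2, ?_, by simpa using mem_of_mem_nhds hV, ?_⟩
  · exact hHa x' hx'U lam'' h3 (h4.trans (min_le_left _ _)) v hvW
  · simpa using hF2
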